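/- arXiv:2011.10105 — 2 statements merged into one kernel-verified Lean document; each statement's English description precedes it below -/
import Mathlib

section
/- Let B1, B2, B3 be closed unit balls in R^3 whose intersection has nonempty interior and whose three boundary spheres are pairwise distinct and each contributes a nonempty piece to the boundary of the intersection. Then the three boundary unit spheres S1, S2, S3 have exactly two points in common. -/
local notation "⟪" x ", " y "⟫" => @inner ℝ _ _ x y

private lemma norm_eq_one_of_sq' {x : EuclideanSpace ℝ (Fin 3)} (h : ‖x‖^2 = 1) : ‖x‖ = 1 := by
  nlinarith [norm_nonneg x]


private lemma realkey {M1 M2 M3 a b g nv R : ℝ}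
    (e1 : nv - 2 * M1 + R^2 = 1) (hM2 : M1 ≤ M2) (hM3 : M1 ≤ M3)
    (hnv : 0 ≤ nv) (hR2 : 1 ≤ R^2)
    (hip : a * M1 + b * M2 + g * M3 = 0)
    (hprof : (0 ≤ b ∧ 0 ≤ g ∧ 0 < a + b + g) ∨ (b ≤ 0 ∧ g ≤ 0 ∧ a + b + g < 0)) :
    nv ≤ 0 := by
  have hM1 : 0 ≤ M1 := by linarith
  rcases hprof with ⟨hb, hg, hs⟩ | ⟨hb, hg, hs⟩
  · have h5 : (a + b + g) * M1 ≤ 0 := by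
      nlinarith [mul_nonneg hb (sub_nonneg.2 hM2), mul_nonneg hg (sub_nonneg.2 hM3)]
    have h6 : M1 ≤ 0 := by
      by_contra h7
      push_neg at h7
      nlinarith [mul_pos hs h7]
    linarith
  · have h5 : 0 ≤ (a + b + g) * M1 := by
      nlinarith [mul_nonpos_of_nonpos_of_nonneg hb (sub_nonneg.2 hM2),
        mul_nonpos_of_nonpos_of_nonneg hg (sub_nonneg.2 hM3)]
    have h6 : M1 ≤ 0 := by
      by_contra h7
      push_neg at h7
      nlinarith [mul_pos (neg_pos.mpr hs) h7]
    linarith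

/-- If `z` is on the unit sphere around `x1` and within the unit balls of `x2, x3`,
the centers are all at distance `R ≥ 1` from `c`, and there is a suitable linear
dependency among the `xi - c`, then `z = c`. -/
private lemma collapse {c z x1 x2 x3 : EuclideanSpace ℝ (Fin 3)} {R a b g : ℝ}
    (hR : 1 ≤ R)
    (h1 : ‖x1 - c‖ = R) (h2 : ‖x2 - c‖ = R) (h3 : ‖x3 - c‖ = R)
    (hdep : a • (x1 - c) + b • (x2 - c) + g • (x3 - c) = 0)
    (hprof : (0 ≤ b ∧ 0 ≤ g ∧ 0 < a + b + g) ∨ (b ≤ 0 ∧ g ≤ 0 ∧ a + b + g < 0))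
    (hz1 : dist z x1 = 1) (hz2 : dist z x2 ≤ 1) (hz3 : dist z x3 ≤ 1) :
    z = c := by
  set v := z - c with hv
  have hzx : ∀ x : EuclideanSpace ℝ (Fin 3), z - x = v - (x - c) := by
    intro x; rw [hv]; abel
  have e1 : ‖v‖^2 - 2 * ⟪v, x1 - c⟫ + R^2 = 1 := by
    have h' : ‖v - (x1 - c)‖ = 1 := by rw [← hzx x1, ← dist_eq_norm]; exact hz1
    have h'' := norm_sub_sq_real v (x1 - c)
    rw [h', h1] at h''
    nlinarith [h'']
  have e2 : ‖v‖^2 - 2 * ⟪v, x2 - c⟫ + R^2 ≤ 1 := by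
    have h' : ‖v - (x2 - c)‖ ≤ 1 := by rw [← hzx x2, ← dist_eq_norm]; exact hz2
    have h'' := norm_sub_sq_real v (x2 - c)
    rw [h2] at h''
    nlinarith [h'', norm_nonneg (v - (x2 - c))]
  have e3 : ‖v‖^2 - 2 * ⟪v, x3 - c⟫ + R^2 ≤ 1 := by
    have h' : ‖v - (x3 - c)‖ ≤ 1 := by rw [← hzx x3, ← dist_eq_norm]; exact hz3
    have h'' := norm_sub_sq_real v (x3 - c)
    rw [h3] at h''
    nlinarith [h'', norm_nonneg (v - (x3 - c))]
  have hip : a * ⟪v, x1 - c⟫ + b * ⟪v, x2 - c⟫ + g * ⟪v, x3 - c⟫ = 0 := by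
    have h' := congrArg (fun w => ⟪v, w⟫) hdep
    simp only [inner_add_right, real_inner_smul_right, inner_zero_right] at h'
    exact h'
  have hM2 : ⟪v, x1 - c⟫ ≤ ⟪v, x2 - c⟫ := by linarith
  have hM3 : ⟪v, x1 - c⟫ ≤ ⟪v, x3 - c⟫ := by linarith
  have hvsq : 0 ≤ ‖v‖^2 := by positivity
  have hR2 : 1 ≤ R^2 := by nlinarith
  have hkey : ‖v‖^2 ≤ 0 :=
    realkey e1 hM2 hM3 hvsq hR2 hip hprof
  have hsq0 : ‖v‖^2 = 0 := le_antisymm hkey hvsq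
  have hv0 : v = 0 := by
    have := pow_eq_zero_iff (n := 2) (by norm_num)|>.mp hsq0
    exact norm_eq_zero.mp this
  rw [hv] at hv0
  exact sub_eq_zero.mp hv0


private lemma realsq {l1 A B R I : ℝ}
    (hsq : l1^2 * R^2 = A^2 * R^2 + 2 * A * B * I + B^2 * R^2)
    (hip : I < R^2) (hA0 : 0 < A) (hB0 : 0 < B) (hl1 : 0 < l1) (hR : 0 < R) :
    l1 < A + B := by
  have hR2 : 0 < R^2 := by positivity
  have hlt : l1^2 * R^2 < (A + B)^2 * R^2 := by nlinarith [mul_pos hA0 hB0]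
  have hsq2 : l1^2 < (A + B)^2 := by nlinarith [hlt, hR2]
  nlinarith [hsq2, hl1, hA0, hB0]

private lemma sum_sign {f1 f2 f3 : EuclideanSpace ℝ (Fin 3)} {R l1 l2 l3 : ℝ}
    (hR : 0 < R) (h1 : ‖f1‖ = R) (h2 : ‖f2‖ = R) (h3 : ‖f3‖ = R)
    (h12 : f1 ≠ f2) (h13 : f1 ≠ f3) (h23 : f2 ≠ f3)
    (hdep : l1 • f1 + l2 • f2 + l3 • f3 = 0)
    (hl1 : 0 < l1) (hl2 : l2 ≤ 0) (hl3 : l3 ≤ 0) :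
    l1 + l2 + l3 < 0 := by
  have hA : (0:ℝ) ≤ -l2 := by linarith
  have hB : (0:ℝ) ≤ -l3 := by linarith
  have hd : l1 • f1 = (-l2) • f2 + (-l3) • f3 := by
    have h : l1 • f1 = (l1 • f1 + l2 • f2 + l3 • f3) + ((-l2) • f2 + (-l3) • f3) := by
      module
    rw [h, hdep, zero_add]
  have hip : ⟪f2, f3⟫ < R^2 := by
    have h0 : 0 < ‖f2 - f3‖^2 := by
      have := norm_pos_iff.mpr (sub_ne_zero.mpr h23)
      positivity
    have h' := norm_sub_sq_real f2 f3
    rw [h2, h3] at h'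
    nlinarith [h', h0]
  have hsq : l1^2 * R^2 = (-l2)^2 * R^2 + 2 * (-l2) * (-l3) * ⟪f2, f3⟫ + (-l3)^2 * R^2 := by
    have h' := congrArg (fun w : EuclideanSpace ℝ (Fin 3) => ‖w‖^2) hd
    rw [norm_add_sq_real] at h'
    simp only [norm_smul, Real.norm_eq_abs, real_inner_smul_left, real_inner_smul_right] at h'
    rw [h1, h2, h3] at h'
    nlinarith [h', sq_abs l1, sq_abs (-l2), sq_abs (-l3)]
  obtain ⟨I, hI⟩ : ∃ x : ℝ, ⟪f2, f3⟫ = x := ⟨_, rfl⟩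
  rw [hI] at hip hsq
  rcases eq_or_lt_of_le hA with hA0 | hA0
  · rcases eq_or_lt_of_le hB with hB0 | hB0
    · exfalso
      have hz : l1 • f1 = 0 := by rw [hd, ← hA0, ← hB0]; simp
      have hf0 : f1 = 0 := by
        rcases smul_eq_zero.mp hz with h | h
        · exact absurd h (ne_of_gt hl1)
        · exact h
      rw [hf0] at h1
      simp at h1
      exact absurd h1.symm (ne_of_gt hR)
    · exfalso
      have hd' : l1 • f1 = (-l3) • f3 := by rw [hd, ← hA0, zero_smul, zero_add]
      have hn : l1 * R = (-l3) * R := by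
        have h' := congrArg norm hd'
        rw [norm_smul, norm_smul, h1, h3, Real.norm_eq_abs, Real.norm_eq_abs,
          abs_of_pos hl1, abs_of_pos hB0] at h'
        exact h'
      have hlB : l1 = -l3 := mul_right_cancel₀ (ne_of_gt hR) hn
      apply h13
      rw [← hlB] at hd'
      exact smul_right_injective _ (ne_of_gt hl1) hd'
  · rcases eq_or_lt_of_le hB with hB0 | hB0
    · exfalso
      have hd' : l1 • f1 = (-l2) • f2 := by rw [hd, ← hB0, zero_smul, add_zero]
      have hn : l1 * R = (-l2) * R := by
        have h' := congrArg norm hd'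
        rw [norm_smul, norm_smul, h1, h2, Real.norm_eq_abs, Real.norm_eq_abs,
          abs_of_pos hl1, abs_of_pos hA0] at h'
        exact h'
      have hlB : l1 = -l2 := mul_right_cancel₀ (ne_of_gt hR) hn
      apply h12
      rw [← hlB] at hd'
      exact smul_right_injective _ (ne_of_gt hl1) hd'
    · have hsq' : l1^2 * R^2 = (-l2)^2 * R^2 + 2 * (-l2) * (-l3) * I + (-l3)^2 * R^2 := by
        linarith [hsq]
      have := realsq hsq' hip hA0 hB0 hl1 hR
      linarith

private lemma orthonormal_comb_normsq {w u : EuclideanSpace ℝ (Fin 3)}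
    (hw : ‖w‖ = 1) (hu : ‖u‖ = 1) (hwu : ⟪w, u⟫ = 0) (s t : ℝ) :
    ‖s • w + t • u‖^2 = s^2 + t^2 := by
  rw [norm_add_sq_real]
  simp only [norm_smul, Real.norm_eq_abs, real_inner_smul_left, real_inner_smul_right]
  rw [hw, hu, hwu]
  simp only [mul_one, mul_zero]
  nlinarith [sq_abs s, sq_abs t]

private lemma one_sub_cos_le {d : ℝ} (hd0 : 0 ≤ d) (hd1 : d ≤ 1) :
    1 - Real.cos d ≤ d^2 / 2 := by
  have hs : Real.sin (d/2) ≤ d/2 := Real.sin_le (by linarith)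
  have hs0 : 0 ≤ Real.sin (d/2) :=
    Real.sin_nonneg_of_nonneg_of_le_pi (by linarith) (by nlinarith [Real.pi_gt_three])
  have h2 := Real.cos_two_mul (d/2)
  have h3 := Real.sin_sq_add_cos_sq (d/2)
  rw [show 2*(d/2) = d by ring] at h2
  nlinarith [mul_self_le_mul_self hs0 hs]

set_option maxHeartbeats 1000000 in
private lemma vertexFalse (x1 x2 x3 c : EuclideanSpace ℝ (Fin 3)) (R a b g : ℝ)
    (hR : 1 ≤ R)
    (h1 : ‖x1 - c‖ = R) (h2 : ‖x2 - c‖ = R) (h3 : ‖x3 - c‖ = R)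
    (hdep : a • (x1 - c) + b • (x2 - c) + g • (x3 - c) = 0)
    (hprof : (0 ≤ b ∧ 0 ≤ g ∧ 0 < a + b + g) ∨ (b ≤ 0 ∧ g ≤ 0 ∧ a + b + g < 0))
    (hcap : ∃ y, dist y x1 = 1 ∧ ∃ ε, 0 < ε ∧
      ∀ z, dist z x1 = 1 → dist z y < ε → dist z x2 ≤ 1 ∧ dist z x3 ≤ 1) : False := by
  obtain ⟨y, hy1, ε, hε, hcap⟩ := hcap
  have hyc : y = c := by
    obtain ⟨hz2, hz3⟩ := hcap y hy1 (by simpa using hε)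
    exact collapse hR h1 h2 h3 hdep hprof hy1 hz2 hz3
  -- an orthonormal pair at y
  obtain ⟨w, hw_def⟩ : ∃ v, v = y - x1 := ⟨_, rfl⟩
  have hw : ‖w‖ = 1 := by rw [hw_def, ← dist_eq_norm]; exact hy1
  have hwne : w ≠ 0 := by intro h; rw [h] at hw; simp at hw
  have hspan : (Submodule.span ℝ {w})ᗮ ≠ ⊥ := by
    intro hbot
    have h1' := Submodule.finrank_add_finrank_orthogonal (K := Submodule.span ℝ {w})
    rw [hbot, finrank_bot, finrank_span_singleton hwne, finrank_euclideanSpace_fin] at h1'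
    omega
  obtain ⟨u0, hu0mem, hu0ne⟩ := Submodule.exists_mem_ne_zero_of_ne_bot hspan
  obtain ⟨u, hu_def⟩ : ∃ v, v = (‖u0‖:ℝ)⁻¹ • u0 := ⟨_, rfl⟩
  have hu : ‖u‖ = 1 := by
    rw [hu_def]
    exact norm_smul_inv_norm (𝕜 := ℝ) hu0ne
  have humem : u ∈ (Submodule.span ℝ {w})ᗮ := by
    rw [hu_def]; exact Submodule.smul_mem _ _ hu0mem
  have hwu : ⟪w, u⟫ = 0 :=
    (Submodule.mem_orthogonal _ u).mp humem w (Submodule.mem_span_singleton_self w)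
  obtain ⟨δ, hδ_def⟩ : ∃ d : ℝ, d = min (ε/2) 1 := ⟨_, rfl⟩
  have hδ0 : 0 < δ := hδ_def ▸ lt_min (by linarith) one_pos
  have hδ1 : δ ≤ 1 := hδ_def ▸ min_le_right _ _
  have hδε : δ < ε := hδ_def ▸ lt_of_le_of_lt (min_le_left _ _) (by linarith)
  obtain ⟨y', hy'_def⟩ : ∃ p, p = x1 + (Real.cos δ • w + Real.sin δ • u) := ⟨_, rfl⟩
  have hy'sub : y' - x1 = Real.cos δ • w + Real.sin δ • u := by rw [hy'_def]; abel
  have hy'x1 : dist y' x1 = 1 := by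
    rw [dist_eq_norm, hy'sub]
    apply norm_eq_one_of_sq'
    rw [orthonormal_comb_normsq hw hu hwu]
    nlinarith [Real.sin_sq_add_cos_sq δ]
  have hyy : y' - y = (Real.cos δ - 1) • w + Real.sin δ • u := by
    have hy_eq : y = x1 + w := by rw [hw_def]; abel
    rw [hy'_def, hy_eq]
    module
  have hdist : dist y' y < ε := by
    rw [dist_eq_norm, hyy]
    have hb' : ‖(Real.cos δ - 1) • w + Real.sin δ • u‖^2 ≤ δ^2 := by
      rw [orthonormal_comb_normsq hw hu hwu]
      nlinarith [Real.sin_sq_add_cos_sq δ, one_sub_cos_le hδ0.le hδ1]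
    obtain ⟨nn, hnn⟩ : ∃ x : ℝ, ‖(Real.cos δ - 1) • w + Real.sin δ • u‖ = x := ⟨_, rfl⟩
    have hnn0 : 0 ≤ nn := by rw [← hnn]; positivity
    rw [hnn] at hb' ⊢
    nlinarith [hnn0, hδ0, hδε, hb']
  have hy'c : y' = c := by
    obtain ⟨hz2, hz3⟩ := hcap y' hy'x1 hdist
    exact collapse hR h1 h2 h3 hdep hprof hy'x1 hz2 hz3
  have h0 : (Real.cos δ - 1) • w + Real.sin δ • u = 0 := by
    rw [← hyy, hy'c, hyc, sub_self]
  have hsin0 : Real.sin δ = 0 := by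
    have h' := congrArg (fun v => ⟪u, v⟫) h0
    simp only [inner_add_right, real_inner_smul_right, inner_zero_right] at h'
    rw [real_inner_comm w u] at h'
    rw [hwu, real_inner_self_eq_norm_sq, hu] at h'
    simpa using h'
  have : 0 < Real.sin δ :=
    Real.sin_pos_of_pos_of_lt_pi hδ0 (by nlinarith [Real.pi_gt_three])
  linarith

set_option maxHeartbeats 4000000 in

/-- Three closed unit balls in ℝ³ with distinct, pairwise-close,
non-collinear centers, whose intersection has nonempty interior and where each
bounding sphere contributes a piece with nonempty relative interior to the
boundary of the intersection, have bounding spheres meeting in exactly two points. -/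
theorem three_unit_balls_two_vertices
    (x1 x2 x3 : EuclideanSpace ℝ (Fin 3))
    (h12 : x1 ≠ x2) (h13 : x1 ≠ x3) (h23 : x2 ≠ x3)
    (hd12 : dist x1 x2 < 2) (hd13 : dist x1 x3 < 2) (hd23 : dist x2 x3 < 2)
    (hcol : ¬ Collinear ℝ ({x1, x2, x3} : Set (EuclideanSpace ℝ (Fin 3))))
    (K : Set (EuclideanSpace ℝ (Fin 3)))
    (hK : K = Metric.closedBall x1 1 ∩ Metric.closedBall x2 1 ∩ Metric.closedBall x3 1)
    (hint : (interior K).Nonempty)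
    (hface : ∀ x ∈ ({x1, x2, x3} : Set (EuclideanSpace ℝ (Fin 3))),
      ∃ y ∈ Metric.sphere x 1 ∩ frontier K, ∃ ε > 0,
        Metric.sphere x 1 ∩ Metric.ball y ε ⊆ frontier K) :
    (Metric.sphere x1 1 ∩ Metric.sphere x2 1 ∩ Metric.sphere x3 1).encard = 2 := by
  classical
  have hrange : Set.range ![x1, x2, x3] = {x1, x2, x3} := by
    ext y
    simp only [Set.mem_range, Set.mem_insert_iff, Set.mem_singleton_iff]
    constructor
    · rintro ⟨i, rfl⟩
      fin_cases i <;> simp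
    · rintro (rfl | rfl | rfl)
      exacts [⟨0, rfl⟩, ⟨1, rfl⟩, ⟨2, rfl⟩]
  have hai : AffineIndependent ℝ ![x1, x2, x3] := by
    rw [affineIndependent_iff_not_collinear, hrange]
    exact hcol
  set s : Affine.Simplex ℝ (EuclideanSpace ℝ (Fin 3)) 2 := ⟨![x1, x2, x3], hai⟩ with hs_def
  obtain ⟨c, hc_def⟩ : ∃ p, p = s.circumcenter := ⟨_, rfl⟩
  obtain ⟨R, hR_def⟩ : ∃ r : ℝ, r = s.circumradius := ⟨_, rfl⟩
  have hp0 : s.points 0 = x1 := rfl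
  have hp1 : s.points 1 = x2 := rfl
  have hp2 : s.points 2 = x3 := rfl
  have hcd : ∀ i : Fin 3, ‖s.points i - c‖ = R := by
    intro i
    rw [hc_def, hR_def, ← dist_eq_norm]
    exact s.dist_circumcenter_eq_circumradius i
  have hc1 : ‖x1 - c‖ = R := by rw [← hp0]; exact hcd 0
  have hc2 : ‖x2 - c‖ = R := by rw [← hp1]; exact hcd 1
  have hc3 : ‖x3 - c‖ = R := by rw [← hp2]; exact hcd 2
  have hR0 : 0 ≤ R := by rw [← hc1]; positivity
  -- distinctness of the difference vectors
  have hne12 : x1 - c ≠ x2 - c := fun h => h12 (by rwa [sub_left_inj] at h)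
  have hne13 : x1 - c ≠ x3 - c := fun h => h13 (by rwa [sub_left_inj] at h)
  have hne23 : x2 - c ≠ x3 - c := fun h => h23 (by rwa [sub_left_inj] at h)
  -- V and its rank
  set V := (affineSpan ℝ (Set.range s.points)).direction with hV_def
  have hVrank : Module.finrank ℝ V = 2 := by
    rw [hV_def, direction_affineSpan]
    exact hai.finrank_vectorSpan (by simp)
  have hfV : ∀ i : Fin 3, s.points i - c ∈ V := by
    intro i
    have h' := AffineSubspace.vsub_mem_direction
      (mem_affineSpan ℝ (Set.mem_range_self i)) (hc_def ▸ s.circumcenter_mem_affineSpan)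
    simpa only [vsub_eq_sub] using h'
  -- caps
  have hKclosed : IsClosed K := by
    rw [hK]
    exact (Metric.isClosed_closedBall.inter Metric.isClosed_closedBall).inter Metric.isClosed_closedBall
  have hfK : ∀ z ∈ frontier K, dist z x1 ≤ 1 ∧ dist z x2 ≤ 1 ∧ dist z x3 ≤ 1 := by
    intro z hz
    have hzK := hKclosed.frontier_subset hz
    rw [hK] at hzK
    exact ⟨hzK.1.1, hzK.1.2, hzK.2⟩
  have cap1 : ∃ y, dist y x1 = 1 ∧ ∃ ε, 0 < ε ∧
      ∀ z, dist z x1 = 1 → dist z y < ε → dist z x2 ≤ 1 ∧ dist z x3 ≤ 1 := by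
    obtain ⟨y, ⟨hys, _⟩, ε, hε, hsub⟩ := hface x1 (by simp)
    exact ⟨y, hys, ε, hε, fun z hz1 hzy =>
      ⟨(hfK z (hsub ⟨hz1, hzy⟩)).2.1, (hfK z (hsub ⟨hz1, hzy⟩)).2.2⟩⟩
  have cap2 : ∃ y, dist y x2 = 1 ∧ ∃ ε, 0 < ε ∧
      ∀ z, dist z x2 = 1 → dist z y < ε → dist z x1 ≤ 1 ∧ dist z x3 ≤ 1 := by
    obtain ⟨y, ⟨hys, _⟩, ε, hε, hsub⟩ := hface x2 (by simp)
    exact ⟨y, hys, ε, hε, fun z hz1 hzy =>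
      ⟨(hfK z (hsub ⟨hz1, hzy⟩)).1, (hfK z (hsub ⟨hz1, hzy⟩)).2.2⟩⟩
  have cap3 : ∃ y, dist y x3 = 1 ∧ ∃ ε, 0 < ε ∧
      ∀ z, dist z x3 = 1 → dist z y < ε → dist z x1 ≤ 1 ∧ dist z x2 ≤ 1 := by
    obtain ⟨y, ⟨hys, _⟩, ε, hε, hsub⟩ := hface x3 (by simp)
    exact ⟨y, hys, ε, hε, fun z hz1 hzy =>
      ⟨(hfK z (hsub ⟨hz1, hzy⟩)).1, (hfK z (hsub ⟨hz1, hzy⟩)).2.1⟩⟩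
  -- the circumradius is < 1
  have hRlt : R < 1 := by
    by_contra hcon
    push_neg at hcon
    have hRpos : (0:ℝ) < R := by linarith
    -- a nontrivial linear dependency among the xi - c
    have hnli : ¬ LinearIndependent ℝ (fun i : Fin 3 => s.points i - c) := by
      intro hli
      have hli' : LinearIndependent ℝ (fun i : Fin 3 => (⟨s.points i - c, hfV i⟩ : V)) := by
        apply LinearIndependent.of_comp V.subtype
        exact hli
      have hcard := hli'.fintype_card_le_finrank
      rw [hVrank] at hcard
      simp at hcard
    obtain ⟨l, hl0, i0, hi0⟩ := Fintype.not_linearIndependent_iff.mp hnli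
    rw [Fin.sum_univ_three, hp0, hp1, hp2] at hl0
    have hnz : ¬ (l 0 = 0 ∧ l 1 = 0 ∧ l 2 = 0) := by
      rintro ⟨e1, e2, e3⟩
      fin_cases i0 <;> simp_all
    have dep213 : l 1 • (x2 - c) + l 0 • (x1 - c) + l 2 • (x3 - c) = 0 := by
      rw [← hl0]; abel
    have dep312 : l 2 • (x3 - c) + l 0 • (x1 - c) + l 1 • (x2 - c) = 0 := by
      rw [← hl0]; abel
    have negdep : (-(l 0)) • (x1 - c) + (-(l 1)) • (x2 - c) + (-(l 2)) • (x3 - c) = 0 := by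
      have h' : (-(l 0)) • (x1 - c) + (-(l 1)) • (x2 - c) + (-(l 2)) • (x3 - c)
          = -(l 0 • (x1 - c) + l 1 • (x2 - c) + l 2 • (x3 - c)) := by module
      rw [h', hl0, neg_zero]
    have negdep213 : (-(l 1)) • (x2 - c) + (-(l 0)) • (x1 - c) + (-(l 2)) • (x3 - c) = 0 := by
      rw [← negdep]; abel
    have negdep312 : (-(l 2)) • (x3 - c) + (-(l 0)) • (x1 - c) + (-(l 1)) • (x2 - c) = 0 := by
      rw [← negdep]; abel
    rcases le_or_gt 0 (l 0) with s1 | s1 <;> rcases le_or_gt 0 (l 1) with s2 | s2 <;>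
      rcases le_or_gt 0 (l 2) with s3 | s3
    · -- (≥,≥,≥) : profile A at vertex 1
      have hS : 0 < l 0 + l 1 + l 2 := by
        rcases lt_or_eq_of_le (by linarith : (0:ℝ) ≤ l 0 + l 1 + l 2) with h | h
        · exact h
        · exact absurd ⟨by linarith, by linarith, by linarith⟩ hnz
      exact vertexFalse x1 x2 x3 c R (l 0) (l 1) (l 2) hcon hc1 hc2 hc3 hl0
        (Or.inl ⟨s2, s3, hS⟩) cap1
    · -- (≥,≥,<) : profile A at vertex 3
      have hSS := sum_sign hRpos hc3 hc1 hc2 hne13.symm hne23.symm hne12 negdep312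
        (by linarith) (by linarith) (by linarith)
      exact vertexFalse x3 x1 x2 c R (l 2) (l 0) (l 1) hcon hc3 hc1 hc2 dep312
        (Or.inl ⟨s1, s2, by linarith⟩) cap3
    · -- (≥,<,≥) : profile A at vertex 2
      have hSS := sum_sign hRpos hc2 hc1 hc3 hne12.symm hne23 hne13 negdep213
        (by linarith) (by linarith) (by linarith)
      exact vertexFalse x2 x1 x3 c R (l 1) (l 0) (l 2) hcon hc2 hc1 hc3 dep213
        (Or.inl ⟨s1, s3, by linarith⟩) cap2
    · -- (≥,<,<) : profile B at vertex 1
      have hS : l 0 + l 1 + l 2 < 0 := by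
        rcases eq_or_lt_of_le s1 with h | h
        · linarith
        · exact sum_sign hRpos hc1 hc2 hc3 hne12 hne13 hne23 hl0 h s2.le s3.le
      exact vertexFalse x1 x2 x3 c R (l 0) (l 1) (l 2) hcon hc1 hc2 hc3 hl0
        (Or.inr ⟨s2.le, s3.le, hS⟩) cap1
    · -- (<,≥,≥) : profile A at vertex 1
      have hSS := sum_sign hRpos hc1 hc2 hc3 hne12 hne13 hne23 negdep
        (by linarith) (by linarith) (by linarith)
      exact vertexFalse x1 x2 x3 c R (l 0) (l 1) (l 2) hcon hc1 hc2 hc3 hl0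
        (Or.inl ⟨s2, s3, by linarith⟩) cap1
    · -- (<,≥,<) : profile B at vertex 2
      have hS : l 1 + l 0 + l 2 < 0 := by
        rcases eq_or_lt_of_le s2 with h | h
        · linarith
        · exact sum_sign hRpos hc2 hc1 hc3 hne12.symm hne23 hne13 dep213 h s1.le s3.le
      exact vertexFalse x2 x1 x3 c R (l 1) (l 0) (l 2) hcon hc2 hc1 hc3 dep213
        (Or.inr ⟨s1.le, s3.le, hS⟩) cap2
    · -- (<,<,≥) : profile B at vertex 3
      have hS : l 2 + l 0 + l 1 < 0 := by
        rcases eq_or_lt_of_le s3 with h | h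
        · linarith
        · exact sum_sign hRpos hc3 hc1 hc2 hne13.symm hne23.symm hne12 dep312 h s1.le s2.le
      exact vertexFalse x3 x1 x2 c R (l 2) (l 0) (l 1) hcon hc3 hc1 hc2 dep312
        (Or.inr ⟨s1.le, s2.le, hS⟩) cap3
    · -- (<,<,<) : profile B at vertex 1
      exact vertexFalse x1 x2 x3 c R (l 0) (l 1) (l 2) hcon hc1 hc2 hc3 hl0
        (Or.inr ⟨s2.le, s3.le, by linarith⟩) cap1
  -- now construct the two intersection points
  have hR2lt : R^2 < 1 := by nlinarith
  obtain ⟨t, ht_def⟩ : ∃ r : ℝ, r = Real.sqrt (1 - R^2) := ⟨_, rfl⟩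
  have ht2 : t^2 = 1 - R^2 := by rw [ht_def]; exact Real.sq_sqrt (by linarith)
  have ht0 : 0 < t := by rw [ht_def]; exact Real.sqrt_pos.mpr (by linarith)
  have hVorank : Module.finrank ℝ (Vᗮ) = 1 := by
    have h' := Submodule.finrank_add_finrank_orthogonal (K := V)
    rw [hVrank, finrank_euclideanSpace_fin] at h'
    omega
  have hVbot : Vᗮ ≠ ⊥ := by
    intro h
    rw [h, finrank_bot] at hVorank
    omega
  obtain ⟨u0, hu0mem, hu0ne⟩ := Submodule.exists_mem_ne_zero_of_ne_bot hVbot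
  obtain ⟨n, hn_def⟩ : ∃ v, v = (‖u0‖:ℝ)⁻¹ • u0 := ⟨_, rfl⟩
  have hn1 : ‖n‖ = 1 := by rw [hn_def]; exact norm_smul_inv_norm (𝕜 := ℝ) hu0ne
  have hn0 : n ≠ 0 := by intro h; rw [h] at hn1; simp at hn1
  have hnmem : n ∈ Vᗮ := by rw [hn_def]; exact Submodule.smul_mem _ _ hu0mem
  have horth : ∀ w ∈ V, ⟪w, n⟫ = 0 := (Submodule.mem_orthogonal V n).mp hnmem
  have hnf1 : ⟪n, x1 - c⟫ = 0 := by
    rw [real_inner_comm]; exact horth _ (by rw [← hp0]; exact hfV 0)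
  have hnf2 : ⟪n, x2 - c⟫ = 0 := by
    rw [real_inner_comm]; exact horth _ (by rw [← hp1]; exact hfV 1)
  have hnf3 : ⟪n, x3 - c⟫ = 0 := by
    rw [real_inner_comm]; exact horth _ (by rw [← hp2]; exact hfV 2)
  have hspanVo : Submodule.span ℝ {n} = Vᗮ :=
    Submodule.eq_of_le_of_finrank_le ((Submodule.span_singleton_le_iff_mem n Vᗮ).mpr hnmem)
      (by rw [hVorank, finrank_span_singleton hn0])
  have hcalc : ∀ (r : ℝ) (x : EuclideanSpace ℝ (Fin 3)), ‖x - c‖ = R → ⟪n, x - c⟫ = 0 →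
      ‖(c + r • n) - x‖^2 = r^2 + R^2 := by
    intro r x hx hnx
    have hrw : (c + r • n) - x = r • n - (x - c) := by abel
    rw [hrw, norm_sub_sq_real, real_inner_smul_left, hnx, norm_smul, Real.norm_eq_abs, hx, hn1]
    simp [sq_abs]
  have hpq_ne : (c + t • n) ≠ (c - t • n) := by
    intro h
    have h2 : (2*t) • n = 0 := by
      have h' : (c + t • n) - (c - t • n) = (2*t) • n := by module
      rw [h, sub_self] at h'
      exact h'.symm
    rcases smul_eq_zero.mp h2 with h' | h'
    · linarith
    · exact hn0 h'
  have hTeq : Metric.sphere x1 1 ∩ Metric.sphere x2 1 ∩ Metric.sphere x3 1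
      = {c + t • n, c - t • n} := by
    ext z
    simp only [Set.mem_inter_iff, Metric.mem_sphere, Set.mem_insert_iff, Set.mem_singleton_iff]
    constructor
    · rintro ⟨⟨hz1, hz2⟩, hz3⟩
      have hz' : ∀ x : EuclideanSpace ℝ (Fin 3), dist z x = 1 →
          ‖z - c‖^2 - 2*⟪z - c, x - c⟫ + ‖x - c‖^2 = 1 := by
        intro x hx
        have h' : ‖(z - c) - (x - c)‖ = 1 := by
          rw [show (z - c) - (x - c) = z - x by abel, ← dist_eq_norm]; exact hx
        have h'' := norm_sub_sq_real (z - c) (x - c)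
        rw [h'] at h''
        nlinarith [h'']
      have i1 := hz' x1 hz1
      have i2 := hz' x2 hz2
      have i3 := hz' x3 hz3
      rw [hc1] at i1; rw [hc2] at i2; rw [hc3] at i3
      have o12 : ⟪x2 - x1, z - c⟫ = 0 := by
        have h' : ⟪z - c, (x2 - c) - (x1 - c)⟫ = 0 := by
          rw [inner_sub_right]; linarith
        rw [show (x2 - c) - (x1 - c) = x2 - x1 by abel] at h'
        rw [real_inner_comm]; exact h'
      have o13 : ⟪x3 - x1, z - c⟫ = 0 := by
        have h' : ⟪z - c, (x3 - c) - (x1 - c)⟫ = 0 := by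
          rw [inner_sub_right]; linarith
        rw [show (x3 - c) - (x1 - c) = x3 - x1 by abel] at h'
        rw [real_inner_comm]; exact h'
      have hpts : s.points = ![x1, x2, x3] := rfl
      have hvV : z - c ∈ Vᗮ := by
        rw [hV_def, direction_affineSpan, hpts, hrange,
          vectorSpan_eq_span_vsub_set_right ℝ (show x1 ∈ ({x1,x2,x3} : Set _) by simp)]
        rw [Submodule.mem_orthogonal]
        intro w hw
        refine Submodule.span_induction ?_ ?_ ?_ ?_ hw
        · rintro w' ⟨x, hx, rfl⟩
          simp only [Set.mem_insert_iff, Set.mem_singleton_iff] at hx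
          rcases hx with rfl | rfl | rfl
          · simp
          · simpa only [vsub_eq_sub] using o12
          · simpa only [vsub_eq_sub] using o13
        · simp
        · intro a b _ _ ha hb
          rw [inner_add_left, ha, hb, add_zero]
        · intro r a _ ha
          rw [real_inner_smul_left, ha, mul_zero]
      have hvn : z - c ∈ Submodule.span ℝ {n} := by rw [hspanVo]; exact hvV
      obtain ⟨r, hr⟩ := Submodule.mem_span_singleton.mp hvn
      have hnormv : ‖z - c‖^2 = r^2 := by
        rw [← hr, norm_smul, Real.norm_eq_abs, hn1]; simp [sq_abs]
      have hinner1 : ⟪z - c, x1 - c⟫ = 0 := by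
        rw [← hr, real_inner_smul_left, hnf1, mul_zero]
      have hr2 : r^2 = t^2 := by rw [ht2]; nlinarith [i1, hnormv, hinner1]
      have habs : |r| = t := by
        rw [← Real.sqrt_sq_eq_abs, hr2, Real.sqrt_sq ht0.le]
      have hzeq : z = c + r • n := by rw [hr]; abel
      rcases (abs_eq ht0.le).mp habs with h | h
      · left; rw [hzeq, h]
      · right; rw [hzeq, h]; module
    · have hq : c - t • n = c + (-t) • n := by module
      rintro (rfl | rfl)
      · refine ⟨⟨?_, ?_⟩, ?_⟩
        · rw [dist_eq_norm]; apply norm_eq_one_of_sq'; rw [hcalc t x1 hc1 hnf1]; linarith [ht2]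
        · rw [dist_eq_norm]; apply norm_eq_one_of_sq'; rw [hcalc t x2 hc2 hnf2]; linarith [ht2]
        · rw [dist_eq_norm]; apply norm_eq_one_of_sq'; rw [hcalc t x3 hc3 hnf3]; linarith [ht2]
      · refine ⟨⟨?_, ?_⟩, ?_⟩
        · rw [hq, dist_eq_norm]; apply norm_eq_one_of_sq'; rw [hcalc (-t) x1 hc1 hnf1, neg_pow]; simp; linarith [ht2]
        · rw [hq, dist_eq_norm]; apply norm_eq_one_of_sq'; rw [hcalc (-t) x2 hc2 hnf2, neg_pow]; simp; linarith [ht2]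
        · rw [hq, dist_eq_norm]; apply norm_eq_one_of_sq'; rw [hcalc (-t) x3 hc3 hnf3, neg_pow]; simp; linarith [ht2]
  rw [hTeq]
  exact Set.encard_pair hpq_ne
end

section
/- Let D1, D2, D3 be closed unit disks in R^2 with non-collinear centers A, B, C such that D1 ∩ D2 ∩ D3 has nonempty interior and each bounding circle contributes an arc to its boundary. Then the circumcenter p of the triangle ABC lies in the interior of D1 ∩ D2 ∩ D3. -/
open RealInnerProductSpace

set_option maxHeartbeats 1000000

namespace CircumDisk

/-- A vector perpendicular to `d` in the plane, with the same norm. -/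
lemma exists_perp (d : EuclideanSpace ℝ (Fin 2)) :
    ∃ e : EuclideanSpace ℝ (Fin 2), ⟪d, e⟫ = 0 ∧ ‖e‖ = ‖d‖ := by
  refine ⟨(WithLp.equiv 2 (Fin 2 → ℝ)).symm ![-(d 1), d 0], ?_, ?_⟩
  · simp [PiLp.inner_apply, Fin.sum_univ_two, RCLike.inner_apply]
    ring
  · have h1 : ⟪(WithLp.equiv 2 (Fin 2 → ℝ)).symm ![-(d 1), d 0],
        (WithLp.equiv 2 (Fin 2 → ℝ)).symm ![-(d 1), d 0]⟫ = ⟪d, d⟫ := by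
      simp only [PiLp.inner_apply, Fin.sum_univ_two, RCLike.inner_apply]
      simp
      ring
    rw [real_inner_self_eq_norm_sq, real_inner_self_eq_norm_sq] at h1
    have h2 := norm_nonneg ((WithLp.equiv 2 (Fin 2 → ℝ)).symm ![-(d 1), d 0])
    have h3 := norm_nonneg d
    nlinarith

/-- Equidistance gives the perpendicular-bisector equation. -/
lemma inner_eq_of_dist_eq {X Y p : EuclideanSpace ℝ (Fin 2)}
    (h : dist p X = dist p Y) : ⟪Y - X, p - X⟫ = ‖Y - X‖ ^ 2 / 2 := by
  have h1 : ‖p - Y‖ = ‖p - X‖ := by rw [← dist_eq_norm, ← dist_eq_norm, h]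
  have h2 : ‖p - Y‖ ^ 2 = ‖p - X‖ ^ 2 := by rw [h1]
  have h3 : p - Y = (p - X) - (Y - X) := by abel
  rw [h3, norm_sub_sq_real] at h2
  have h4 := real_inner_comm (p - X) (Y - X)
  linarith

/-- A point of the unit circle around `X` lying in the closed unit ball around `Y`. -/
lemma inner_ge_of_mem {X Y z : EuclideanSpace ℝ (Fin 2)}
    (hz : ‖z - X‖ = 1) (hzY : dist z Y ≤ 1) :
    ‖Y - X‖ ^ 2 / 2 ≤ ⟪Y - X, z - X⟫ := by
  have h1 : ‖z - Y‖ ≤ 1 := by rw [← dist_eq_norm]; exact hzY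
  have h2 : ‖z - Y‖ ^ 2 ≤ 1 := by nlinarith [norm_nonneg (z - Y)]
  have h3 : z - Y = (z - X) - (Y - X) := by abel
  rw [h3, norm_sub_sq_real, hz] at h2
  have h4 := real_inner_comm (z - X) (Y - X)
  linarith

/-- If a whole neighborhood of `y` on the unit circle around `X` lies in the
closed unit ball around `Y`, then `y` satisfies the inequality strictly. -/
lemma strict_arc {X Y y : EuclideanSpace ℝ (Fin 2)} (hXY : Y - X ≠ 0)
    (hy : ‖y - X‖ = 1) {ε : ℝ} (hε : 0 < ε)
    (h : ∀ z : EuclideanSpace ℝ (Fin 2), ‖z - X‖ = 1 → ‖z - y‖ < ε →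
      ‖Y - X‖ ^ 2 / 2 ≤ ⟪Y - X, z - X⟫) :
    ‖Y - X‖ ^ 2 / 2 < ⟪Y - X, y - X⟫ := by
  set a := Y - X with ha
  set d := y - X with hd
  have hle : ‖a‖ ^ 2 / 2 ≤ ⟪a, d⟫ := h y hy (by simpa using hε)
  rcases lt_or_eq_of_le hle with hlt | heq
  · exact hlt
  exfalso
  have haa : 0 < ‖a‖ := norm_pos_iff.mpr hXY
  have hI0 : 0 < ⟪a, d⟫ := by rw [← heq]; positivity
  obtain ⟨dp, hdp0, hdpn⟩ := exists_perp d
  have hdpn1 : ‖dp‖ = 1 := by rw [hdpn, hy]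
  obtain ⟨s, hs2, hsJ⟩ : ∃ s : ℝ, s ^ 2 = 1 ∧ s * ⟪a, dp⟫ ≤ 0 := by
    rcases le_or_gt ⟪a, dp⟫ 0 with h' | h'
    · exact ⟨1, by norm_num, by linarith⟩
    · exact ⟨-1, by norm_num, by nlinarith⟩
  set m : ℝ := min (ε / 4) 1 with hm
  have hm0 : 0 < m := by positivity
  have hm1 : m ≤ 1 := min_le_right _ _
  have hmε : m ≤ ε / 4 := min_le_left _ _
  set u : ℝ := s * m with hu
  have hu2 : u ^ 2 = m ^ 2 := by rw [hu]; nlinarith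
  have hden : (0:ℝ) < 1 + u ^ 2 := by positivity
  have hdd : ⟪d, d⟫ = 1 := by rw [real_inner_self_eq_norm_sq, hy]; norm_num
  have hpp : ⟪dp, dp⟫ = 1 := by rw [real_inner_self_eq_norm_sq, hdpn1]; norm_num
  set w : EuclideanSpace ℝ (Fin 2) :=
    (1 + u ^ 2)⁻¹ • ((1 - u ^ 2) • d + (2 * u) • dp) with hw
  have hww : ⟪w, w⟫ = 1 := by
    rw [hw, real_inner_smul_left, real_inner_smul_right, inner_add_left,
      inner_add_right, inner_add_right, real_inner_smul_left, real_inner_smul_left,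
      real_inner_smul_left, real_inner_smul_left, real_inner_smul_right,
      real_inner_smul_right, real_inner_smul_right, real_inner_smul_right,
      hdd, hpp, hdp0, real_inner_comm d dp, hdp0]
    field_simp
    try ring
  have hdw : ⟪d, w⟫ = (1 - u ^ 2) / (1 + u ^ 2) := by
    rw [hw, real_inner_smul_right, inner_add_right, real_inner_smul_right,
      real_inner_smul_right, hdd, hdp0]
    field_simp
    try ring
  have haw : ⟪a, w⟫ = (1 + u ^ 2)⁻¹ * ((1 - u ^ 2) * ⟪a, d⟫ + 2 * u * ⟪a, dp⟫) := by
    rw [hw, real_inner_smul_right, inner_add_right, real_inner_smul_right,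
      real_inner_smul_right]
    try ring
  set z : EuclideanSpace ℝ (Fin 2) := X + w with hz
  have hzX : z - X = w := by rw [hz]; abel
  have hzX1 : ‖z - X‖ = 1 := by
    have h1 : ‖z - X‖ ^ 2 = 1 := by rw [← real_inner_self_eq_norm_sq, hzX, hww]
    nlinarith [norm_nonneg (z - X)]
  have hzy : z - y = w - d := by
    rw [hz, hd]; abel
  have hinner_zy : ⟪z - y, z - y⟫ = 2 - 2 * ((1 - u ^ 2) / (1 + u ^ 2)) := by
    rw [hzy]
    rw [real_inner_sub_sub_self, hww, hdd, real_inner_comm d w, hdw]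
    ring
  have hzyε : ‖z - y‖ < ε := by
    have h1 : ‖z - y‖ ^ 2 = 2 - 2 * ((1 - u ^ 2) / (1 + u ^ 2)) := by
      rw [← real_inner_self_eq_norm_sq, hinner_zy]
    have h2 : ‖z - y‖ ^ 2 ≤ 4 * m ^ 2 := by
      rw [h1]
      have h3 : 2 - 2 * ((1 - u ^ 2) / (1 + u ^ 2)) = 4 * u ^ 2 / (1 + u ^ 2) := by
        field_simp; ring
      rw [h3, hu2]
      exact div_le_self (by positivity) (by nlinarith [sq_nonneg m])
    nlinarith [norm_nonneg (z - y), hε]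
  have hlt2 : ⟪a, z - X⟫ < ‖a‖ ^ 2 / 2 := by
    rw [hzX, haw, ← heq]
    rw [inv_mul_lt_iff₀ hden]
    have huJ : u * ⟪a, dp⟫ ≤ 0 := by rw [hu]; nlinarith
    nlinarith [huJ, hu2, mul_pos (mul_pos hm0 hm0) (mul_pos haa haa)]
  have := h z hzX1 hzyε
  linarith

/-- Non-collinearity gives linear independence of the edge vectors. -/
lemma li_pair {X Y Z : EuclideanSpace ℝ (Fin 2)}
    (h : ¬ Collinear ℝ ({X, Y, Z} : Set (EuclideanSpace ℝ (Fin 2)))) :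
    LinearIndependent ℝ ![Y - X, Z - X] := by
  rw [LinearIndependent.pair_iff]
  intro s t hst
  by_contra hc
  rw [not_and_or] at hc
  apply h
  rw [collinear_iff_of_mem (Set.mem_insert X {Y, Z})]
  rcases hc with hs | ht
  · -- s ≠ 0, direction Z - X
    push_neg at hs
    refine ⟨Z - X, ?_⟩
    intro q hq
    have h1 : Y - X = (-(t / s)) • (Z - X) := by
      have h2 : s • (Y - X) = -(t • (Z - X)) := eq_neg_of_add_eq_zero_left hst
      have h3 : s⁻¹ • (s • (Y - X)) = s⁻¹ • (-(t • (Z - X))) := by rw [h2]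
      rw [inv_smul_smul₀ hs, smul_neg, smul_smul, ← neg_smul] at h3
      rw [h3]
      congr 1
      field_simp
    simp only [Set.mem_insert_iff, Set.mem_singleton_iff] at hq
    rcases hq with rfl | rfl | rfl
    · exact ⟨0, by simp⟩
    · exact ⟨-(t / s), by rw [vadd_eq_add, ← h1]; abel⟩
    · exact ⟨1, by rw [vadd_eq_add, one_smul]; abel⟩
  · -- t ≠ 0, direction Y - X
    push_neg at ht
    refine ⟨Y - X, ?_⟩
    intro q hq
    have h1 : Z - X = (-(s / t)) • (Y - X) := by
      have h2 : t • (Z - X) = -(s • (Y - X)) := eq_neg_of_add_eq_zero_right hst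
      have h3 : t⁻¹ • (t • (Z - X)) = t⁻¹ • (-(s • (Y - X))) := by rw [h2]
      rw [inv_smul_smul₀ ht, smul_neg, smul_smul, ← neg_smul] at h3
      rw [h3]
      congr 1
      field_simp
    simp only [Set.mem_insert_iff, Set.mem_singleton_iff] at hq
    rcases hq with rfl | rfl | rfl
    · exact ⟨0, by simp⟩
    · exact ⟨1, by rw [vadd_eq_add, one_smul]; abel⟩
    · exact ⟨-(s / t), by rw [vadd_eq_add, ← h1]; abel⟩

/-- The sum identity for the "angle" inner products at two vertices. -/
lemma inner_sum_pair (U V W : EuclideanSpace ℝ (Fin 2)) :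
    ⟪V - U, W - U⟫ + ⟪U - V, W - V⟫ = ‖V - U‖ ^ 2 := by
  have h : U - V = -(V - U) := by abel
  rw [h, inner_neg_left, ← sub_eq_add_neg, ← inner_sub_right]
  have h2 : W - U - (W - V) = V - U := by abel
  rw [h2, real_inner_self_eq_norm_sq]

/-- Main vertex lemma: at a vertex whose two adjacent angles are non-obtuse,
the arc condition forces the circumradius below 1. -/
lemma vertex_case (X Y Z p : EuclideanSpace ℝ (Fin 2))
    (K : Set (EuclideanSpace ℝ (Fin 2)))
    (hKsub : K ⊆ Metric.closedBall Y 1 ∩ Metric.closedBall Z 1)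
    (hKfr : frontier K ⊆ K)
    (hcolXYZ : ¬ Collinear ℝ ({X, Y, Z} : Set (EuclideanSpace ℝ (Fin 2))))
    (h1 : ⟪Y - X, Z - X⟫ ≤ ‖Y - X‖ ^ 2)
    (h2 : ⟪Y - X, Z - X⟫ ≤ ‖Z - X‖ ^ 2)
    (hpY : dist p X = dist p Y) (hpZ : dist p X = dist p Z)
    (hfaceX : ∃ y ∈ Metric.sphere X 1 ∩ frontier K, ∃ ε > 0,
      Metric.sphere X 1 ∩ Metric.ball y ε ⊆ frontier K) :
    dist p X < 1 := by
  obtain ⟨y, ⟨hy1, hy2⟩, ε, hε, harc'⟩ := hfaceX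
  have hy : ‖y - X‖ = 1 := by
    rw [← dist_eq_norm]; exact Metric.mem_sphere.mp hy1
  have harc : ∀ z : EuclideanSpace ℝ (Fin 2), ‖z - X‖ = 1 → ‖z - y‖ < ε →
      dist z Y ≤ 1 ∧ dist z Z ≤ 1 := by
    intro z hz1 hz2
    have hzK : z ∈ K := hKfr (harc' ⟨Metric.mem_sphere.mpr (by rw [dist_eq_norm]; exact hz1),
      Metric.mem_ball.mpr (by rw [dist_eq_norm]; exact hz2)⟩)
    have := hKsub hzK
    exact ⟨Metric.mem_closedBall.mp this.1, Metric.mem_closedBall.mp this.2⟩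
  have hli : LinearIndependent ℝ ![Y - X, Z - X] := li_pair hcolXYZ
  have ha0 : Y - X ≠ 0 := by
    have := hli.ne_zero 0; simpa using this
  have hb0 : Z - X ≠ 0 := by
    have := hli.ne_zero 1; simpa using this
  set a := Y - X with ha
  set b := Z - X with hb
  -- strict arc inequalities
  have hsA : ‖a‖ ^ 2 / 2 < ⟪a, y - X⟫ :=
    strict_arc ha0 hy hε (fun z hz1 hz2 => inner_ge_of_mem hz1 (harc z hz1 hz2).1)
  have hsB : ‖b‖ ^ 2 / 2 < ⟪b, y - X⟫ :=
    strict_arc hb0 hy hε (fun z hz1 hz2 => inner_ge_of_mem hz1 (harc z hz1 hz2).2)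
  -- basis decomposition
  have hcard : Fintype.card (Fin 2) = Module.finrank ℝ (EuclideanSpace ℝ (Fin 2)) := by
    simp [finrank_euclideanSpace]
  set Bas := basisOfLinearIndependentOfCardEqFinrank hli hcard with hBas
  have hBcoe : ⇑Bas = ![a, b] := coe_basisOfLinearIndependentOfCardEqFinrank _ _
  set β := Bas.repr (p - X) 0 with hβdef
  set γ := Bas.repr (p - X) 1 with hγdef
  have hrepr : p - X = β • a + γ • b := by
    have h0 := Bas.sum_repr (p - X)
    rw [Fin.sum_univ_two, hBcoe] at h0
    simp only [Matrix.cons_val_zero, Matrix.cons_val_one, Matrix.head_cons] at h0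
    exact h0.symm
  -- linear system from equidistance
  have hva : ⟪a, p - X⟫ = ‖a‖ ^ 2 / 2 := inner_eq_of_dist_eq hpY
  have hvb : ⟪b, p - X⟫ = ‖b‖ ^ 2 / 2 := inner_eq_of_dist_eq hpZ
  have e1 : β * ‖a‖ ^ 2 + γ * ⟪a, b⟫ = ‖a‖ ^ 2 / 2 := by
    have h0 := hva
    rw [hrepr, inner_add_right, real_inner_smul_right, real_inner_smul_right,
      real_inner_self_eq_norm_sq] at h0
    linarith
  have e2 : β * ⟪a, b⟫ + γ * ‖b‖ ^ 2 = ‖b‖ ^ 2 / 2 := by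
    have h0 := hvb
    rw [hrepr, inner_add_right, real_inner_smul_right, real_inner_smul_right,
      real_inner_self_eq_norm_sq, real_inner_comm a b] at h0
    linarith
  -- strict Cauchy-Schwarz
  have hpair := LinearIndependent.pair_iff.mp hli
  have hCS1 : ⟪a, b⟫ < ‖a‖ * ‖b‖ := by
    apply inner_lt_norm_mul_iff_real.mpr
    intro hcon
    have := hpair ‖b‖ (-‖a‖) (by rw [neg_smul, hcon]; abel)
    exact (norm_ne_zero_iff.mpr hb0) (by linarith [this.2, neg_eq_zero.mp this.2])
  have hCS2 : -⟪a, b⟫ < ‖a‖ * ‖b‖ := by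
    have h0 : ⟪-a, b⟫ < ‖-a‖ * ‖b‖ := by
      apply inner_lt_norm_mul_iff_real.mpr
      intro hcon
      rw [smul_neg, norm_neg] at hcon
      have h3 : ‖b‖ • a + ‖a‖ • b = 0 := by
        rw [← neg_eq_iff_eq_neg.mpr hcon.symm]; abel
      have := hpair ‖b‖ ‖a‖ h3
      exact (norm_ne_zero_iff.mpr hb0) this.1
    rw [inner_neg_left, norm_neg] at h0
    linarith
  have hCS : ⟪a, b⟫ ^ 2 < ‖a‖ ^ 2 * ‖b‖ ^ 2 := by nlinarith
  have hD : 0 < ‖a‖ ^ 2 * ‖b‖ ^ 2 - ⟪a, b⟫ ^ 2 := by linarith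
  -- nonnegativity of the coefficients
  have hβnum : β * (‖a‖ ^ 2 * ‖b‖ ^ 2 - ⟪a, b⟫ ^ 2) = ‖b‖ ^ 2 * (‖a‖ ^ 2 - ⟪a, b⟫) / 2 := by
    linear_combination ‖b‖ ^ 2 * e1 - ⟪a, b⟫ * e2
  have hγnum : γ * (‖a‖ ^ 2 * ‖b‖ ^ 2 - ⟪a, b⟫ ^ 2) = ‖a‖ ^ 2 * (‖b‖ ^ 2 - ⟪a, b⟫) / 2 := by
    linear_combination ‖a‖ ^ 2 * e2 - ⟪a, b⟫ * e1
  have hβ : 0 ≤ β := by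
    by_contra hc
    push_neg at hc
    have hneg : β * (‖a‖ ^ 2 * ‖b‖ ^ 2 - ⟪a, b⟫ ^ 2) < 0 := mul_neg_of_neg_of_pos hc hD
    have hpos : 0 ≤ ‖b‖ ^ 2 * (‖a‖ ^ 2 - ⟪a, b⟫) / 2 := by
      have h0 : 0 ≤ ‖a‖ ^ 2 - ⟪a, b⟫ := by linarith
      have h0' : (0:ℝ) ≤ ‖b‖ ^ 2 := sq_nonneg _
      nlinarith
    linarith
  have hγ : 0 ≤ γ := by
    by_contra hc
    push_neg at hc
    have hneg : γ * (‖a‖ ^ 2 * ‖b‖ ^ 2 - ⟪a, b⟫ ^ 2) < 0 := mul_neg_of_neg_of_pos hc hD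
    have hpos : 0 ≤ ‖a‖ ^ 2 * (‖b‖ ^ 2 - ⟪a, b⟫) / 2 := by
      have h0 : 0 ≤ ‖b‖ ^ 2 - ⟪a, b⟫ := by linarith
      have h0' : (0:ℝ) ≤ ‖a‖ ^ 2 := sq_nonneg _
      nlinarith
    linarith
  -- conclude
  by_cases hpX : p = X
  · rw [hpX, dist_self]; norm_num
  have hv : p - X ≠ 0 := sub_ne_zero.mpr hpX
  have hβγ : 0 < β ∨ 0 < γ := by
    by_contra hc
    push_neg at hc
    have hβ0 : β = 0 := le_antisymm hc.1 hβ
    have hγ0 : γ = 0 := le_antisymm hc.2 hγ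
    rw [hβ0, hγ0, zero_smul, zero_smul, add_zero] at hrepr
    exact hv hrepr
  have hve : ⟪p - X, y - X⟫ = β * ⟪a, y - X⟫ + γ * ⟪b, y - X⟫ := by
    nth_rewrite 1 [hrepr]
    rw [inner_add_left, real_inner_smul_left, real_inner_smul_left]
  have hvv : ‖p - X‖ ^ 2 = β * (‖a‖ ^ 2 / 2) + γ * (‖b‖ ^ 2 / 2) := by
    rw [← real_inner_self_eq_norm_sq]
    nth_rewrite 1 [hrepr]
    rw [inner_add_left, real_inner_smul_left, real_inner_smul_left, hva, hvb]
  have hlt : ‖p - X‖ ^ 2 < ⟪p - X, y - X⟫ := by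
    rw [hve, hvv]
    rcases hβγ with h0 | h0
    · nlinarith
    · nlinarith
  have hle : ⟪p - X, y - X⟫ ≤ ‖p - X‖ := by
    calc ⟪p - X, y - X⟫ ≤ ‖p - X‖ * ‖y - X‖ := real_inner_le_norm _ _
    _ = ‖p - X‖ := by rw [hy, mul_one]
  have hnp : 0 < ‖p - X‖ := norm_pos_iff.mpr hv
  rw [dist_eq_norm]
  nlinarith

end CircumDisk

open CircumDisk in
/-- For three closed unit disks in ℝ² with non-collinear centers whose
intersection has nonempty interior and each of whose bounding circles contributes a
nondegenerate arc to the boundary of the intersection, the circumcenter of the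
triangle of centers lies in the interior of the intersection. -/
theorem circumcenter_in_disk_polygon
    (A B C : EuclideanSpace ℝ (Fin 2))
    (hcol : ¬ Collinear ℝ ({A, B, C} : Set (EuclideanSpace ℝ (Fin 2))))
    (K : Set (EuclideanSpace ℝ (Fin 2)))
    (hK : K = Metric.closedBall A 1 ∩ Metric.closedBall B 1 ∩ Metric.closedBall C 1)
    (hint : (interior K).Nonempty)
    (hface : ∀ c ∈ ({A, B, C} : Set (EuclideanSpace ℝ (Fin 2))),
      ∃ y ∈ Metric.sphere c 1 ∩ frontier K, ∃ ε > 0,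
        Metric.sphere c 1 ∩ Metric.ball y ε ⊆ frontier K)
    (p : EuclideanSpace ℝ (Fin 2))
    (hpA : dist p A = dist p B) (hpB : dist p B = dist p C) :
    p ∈ interior K := by
  have hKclosed : IsClosed K := by
    rw [hK]
    exact (Metric.isClosed_closedBall.inter Metric.isClosed_closedBall).inter Metric.isClosed_closedBall
  have hKfr : frontier K ⊆ K := hKclosed.frontier_subset
  have hsubA : K ⊆ Metric.closedBall B 1 ∩ Metric.closedBall C 1 := by
    rw [hK]; intro x hx; exact ⟨hx.1.2, hx.2⟩
  have hsubB : K ⊆ Metric.closedBall A 1 ∩ Metric.closedBall C 1 := by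
    rw [hK]; intro x hx; exact ⟨hx.1.1, hx.2⟩
  have hsubC : K ⊆ Metric.closedBall A 1 ∩ Metric.closedBall B 1 := by
    rw [hK]; intro x hx; exact ⟨hx.1.1, hx.1.2⟩
  have hcolB : ¬ Collinear ℝ ({B, A, C} : Set (EuclideanSpace ℝ (Fin 2))) := by
    rwa [Set.insert_comm]
  have hcolC : ¬ Collinear ℝ ({C, A, B} : Set (EuclideanSpace ℝ (Fin 2))) := by
    have hset : ({C, A, B} : Set (EuclideanSpace ℝ (Fin 2))) = {A, B, C} := by
      ext x; simp only [Set.mem_insert_iff, Set.mem_singleton_iff]; tauto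
    rwa [hset]
  have hfA := hface A (by simp)
  have hfB := hface B (by simp)
  have hfC := hface C (by simp)
  have hAB : ⟪B - A, C - A⟫ + ⟪A - B, C - B⟫ = ‖B - A‖ ^ 2 := inner_sum_pair A B C
  have hAC : ⟪B - A, C - A⟫ + ⟪A - C, B - C⟫ = ‖C - A‖ ^ 2 := by
    have h0 := inner_sum_pair A C B
    rwa [real_inner_comm (B - A) (C - A)] at h0
  have hBC : ⟪A - B, C - B⟫ + ⟪A - C, B - C⟫ = ‖C - B‖ ^ 2 := by
    have h0 := inner_sum_pair B C A
    rwa [real_inner_comm (A - B) (C - B), real_inner_comm (A - C) (B - C)] at h0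
  have hdA : dist p A < 1 := by
    by_cases h1 : 0 ≤ ⟪A - B, C - B⟫
    · by_cases h2 : 0 ≤ ⟪A - C, B - C⟫
      · -- vertex A
        exact vertex_case A B C p K hsubA hKfr hcol (by linarith) (by linarith)
          hpA (hpA.trans hpB) hfA
      · -- vertex C
        push_neg at h2
        have hcA : 0 ≤ ⟪B - A, C - A⟫ := by nlinarith [sq_nonneg ‖C - A‖]
        have hd : dist p C < 1 := by
          refine vertex_case C A B p K hsubC hKfr hcolC ?_ ?_
            (hpA.trans hpB).symm hpB.symm hfC
          · rw [norm_sub_rev A C]; linarith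
          · rw [norm_sub_rev B C]; linarith
        rw [hpA, hpB]; exact hd
    · -- vertex B
      push_neg at h1
      have hcA : 0 ≤ ⟪B - A, C - A⟫ := by nlinarith [sq_nonneg ‖B - A‖]
      have hcC : 0 ≤ ⟪A - C, B - C⟫ := by nlinarith [sq_nonneg ‖C - B‖]
      have hd : dist p B < 1 := by
        refine vertex_case B A C p K hsubB hKfr hcolB ?_ ?_ hpA.symm hpB hfB
        · rw [norm_sub_rev A B]; linarith
        · linarith
      rw [hpA]; exact hd
  have hdB : dist p B < 1 := by rw [← hpA]; exact hdA
  have hdC : dist p C < 1 := by rw [← hpB]; exact hdB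
  rw [hK, interior_inter, interior_inter, interior_closedBall A one_ne_zero,
    interior_closedBall B one_ne_zero, interior_closedBall C one_ne_zero]
  exact ⟨⟨Metric.mem_ball.mpr hdA, Metric.mem_ball.mpr hdB⟩, Metric.mem_ball.mpr hdC⟩
end
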